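/- Let N ≥ 1. Let A be an (N+1)×(N+1) real matrix whose last row vanishes, set H = Aᵀ * A, and suppose φ : Fin (N+1) → (Fin (N+1) → ℝ) is a basis of ℝ^(N+1) with H.mulVec (φ n) = (E n) • φ n, where E : Fin (N+1) → ℝ is strictly increasing (E 0 < E 1 < ⋯ < E N). Let A' be an N×N real matrix and κ > 0, and suppose for all i, j ∈ Fin N, (A * Aᵀ) (i.castSucc) (j.castSucc) = κ · (A'ᵀ * A') i j + (if i = j then E 1 else 0). Assume that for every n ∈ Fin N the vector ψ n : Fin N → ℝ defined by (ψ n) i = (A.mulVec (φ (n.succ))) (i.castSucc) is nonzero. Then a real number μ is an eigenvalue of A'ᵀ * A' (i.e., there exists v ≠ 0 with (A'ᵀ * A').mulVec v = μ • v) if and only if μ = κ⁻¹ · (E (n.succ) - E 1) for some n ∈ Fin N. -/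

import Mathlib

open Matrix

theorem partner_spectrum (N : ℕ) (hN : 1 ≤ N)
    (A : Matrix (Fin (N + 1)) (Fin (N + 1)) ℝ)
    (hlast : ∀ j, A (Fin.last N) j = 0)
    (φ : Fin (N + 1) → (Fin (N + 1) → ℝ))
    (hindep : LinearIndependent ℝ φ)
    (hspan : Submodule.span ℝ (Set.range φ) = ⊤)
    (E : Fin (N + 1) → ℝ) (hE : StrictMono E)
    (heig : ∀ n, (Aᵀ * A).mulVec (φ n) = E n • φ n)
    (A' : Matrix (Fin N) (Fin N) ℝ) (κ : ℝ) (hκ : 0 < κ)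
    (hsi : ∀ i j : Fin N,
      (A * Aᵀ) i.castSucc j.castSucc = κ * (A'ᵀ * A') i j + (if i = j then E 1 else 0))
    (hψ : ∀ n : Fin N, (fun i : Fin N => (A.mulVec (φ n.succ)) i.castSucc) ≠ 0) :
    ∀ μ : ℝ,
      (∃ v : Fin N → ℝ, v ≠ 0 ∧ (A'ᵀ * A').mulVec v = μ • v) ↔
        ∃ n : Fin N, μ = κ⁻¹ * (E n.succ - E 1) := by
  have hNe : Nonempty (Fin N) := ⟨⟨0, hN⟩⟩
  set M := A'ᵀ * A' with hM
  set ψ : Fin N → (Fin N → ℝ) := fun n i => (A.mulVec (φ n.succ)) i.castSucc with hψdef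
  set μs : Fin N → ℝ := fun n => κ⁻¹ * (E n.succ - E 1) with hμs
  -- key eigen relation
  have key : ∀ n : Fin N, M.mulVec (ψ n) = μs n • ψ n := by
    intro n
    funext i
    have hw0 : (A.mulVec (φ n.succ)) (Fin.last N) = 0 := by
      simp [Matrix.mulVec, dotProduct, hlast]
    have h1 : (A * Aᵀ).mulVec (A.mulVec (φ n.succ)) = E n.succ • A.mulVec (φ n.succ) := by
      rw [Matrix.mulVec_mulVec, Matrix.mul_assoc, ← Matrix.mulVec_mulVec, heig,
        Matrix.mulVec_smul]
    have h2 : ((A * Aᵀ).mulVec (A.mulVec (φ n.succ))) i.castSucc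
        = κ * (M.mulVec (ψ n)) i + E 1 * ψ n i := by
      have hstep : ((A * Aᵀ).mulVec (A.mulVec (φ n.succ))) i.castSucc
          = ∑ j : Fin (N+1), (A * Aᵀ) i.castSucc j * (A.mulVec (φ n.succ)) j := rfl
      rw [hstep, Fin.sum_univ_castSucc, hw0, mul_zero, add_zero]
      have hterm : ∀ k : Fin N,
          (A * Aᵀ) i.castSucc k.castSucc * (A.mulVec (φ n.succ)) k.castSucc
          = κ * (M i k * ψ n k) + (if i = k then E 1 else 0) * ψ n k := by
        intro k
        rw [hsi i k]
        show (κ * M i k + (if i = k then E 1 else 0)) * (A.mulVec (φ n.succ)) k.castSucc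
          = κ * (M i k * (A.mulVec (φ n.succ)) k.castSucc)
            + (if i = k then E 1 else 0) * (A.mulVec (φ n.succ)) k.castSucc
        ring
      rw [Finset.sum_congr rfl (fun k _ => hterm k)]
      rw [Finset.sum_add_distrib, ← Finset.mul_sum]
      congr 1
      simp [ite_mul]
    have h3 : ((A * Aᵀ).mulVec (A.mulVec (φ n.succ))) i.castSucc = E n.succ * ψ n i := by
      rw [h1]; rfl
    have h4 : κ * (M.mulVec (ψ n)) i = (E n.succ - E 1) * ψ n i := by
      rw [h2] at h3; linarith
    have h5 : (M.mulVec (ψ n)) i = κ⁻¹ * ((E n.succ - E 1) * ψ n i) := by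
      rw [← h4]; field_simp
    rw [Pi.smul_apply, h5, hμs]
    simp [mul_assoc]
  have hinj : Function.Injective μs := by
    intro a b hab
    simp only [hμs] at hab
    have hEab : E a.succ = E b.succ := by
      have hκ' : κ⁻¹ ≠ 0 := inv_ne_zero hκ.ne'
      have := mul_left_cancel₀ hκ' hab
      linarith
    exact Fin.succ_injective _ (hE.injective hEab)
  have heigvec : ∀ n : Fin N,
      Module.End.HasEigenvector (Matrix.mulVecLin M) (μs n) (ψ n) := by
    intro n
    refine ⟨?_, hψ n⟩
    rw [Module.End.mem_eigenspace_iff, Matrix.mulVecLin_apply]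
    exact key n
  have hli : LinearIndependent ℝ ψ :=
    Module.End.eigenvectors_linearIndependent' (Matrix.mulVecLin M) μs hinj ψ heigvec
  have hcard : Fintype.card (Fin N) = Module.finrank ℝ (Fin N → ℝ) := by simp
  let b : Module.Basis (Fin N) ℝ (Fin N → ℝ) := basisOfLinearIndependentOfCardEqFinrank hli hcard
  have hb : ⇑b = ψ := coe_basisOfLinearIndependentOfCardEqFinrank hli hcard
  intro μ
  constructor
  · rintro ⟨v, hv0, hv⟩
    set c : Fin N → ℝ := fun m => b.repr v m with hc
    have hvsum : v = ∑ m, c m • b m := (b.sum_repr v).symm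
    have h5 : M.mulVec v = ∑ m, (c m * μs m) • b m := by
      calc M.mulVec v = Matrix.mulVecLin M (∑ m, c m • b m) := by
            rw [← hvsum, Matrix.mulVecLin_apply]
        _ = ∑ m, c m • Matrix.mulVecLin M (b m) := by
            rw [map_sum]
            exact Finset.sum_congr rfl fun m _ => LinearMap.map_smul _ _ _
        _ = ∑ m, (c m * μs m) • b m := by
            refine Finset.sum_congr rfl fun m _ => ?_
            rw [Matrix.mulVecLin_apply]
            conv_lhs => rw [hb]
            rw [key m, smul_smul, mul_comm]
            rw [hb]
    have h6 : ∀ m, c m * μs m = μ * c m := by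
      intro m
      have e1 : b.repr (M.mulVec v) m = c m * μs m := by
        rw [h5]
        exact congrFun (b.repr_sum_self (fun m => c m * μs m)) m
      have e2 : b.repr (M.mulVec v) m = μ * c m := by
        rw [hv, LinearEquiv.map_smul]
        simp [hc]
      rw [e2] at e1; exact e1.symm
    have hex : ∃ m, c m ≠ 0 := by
      by_contra hall
      push_neg at hall
      apply hv0
      rw [hvsum]
      simp [hall]
    obtain ⟨m, hm⟩ := hex
    refine ⟨m, ?_⟩
    have := h6 m
    have : μs m = μ := by
      have h := h6 m
      field_simp at h
      rcases mul_eq_mul_right_iff.mp (by linarith [h6 m] : μs m * c m = μ * c m) with h' | h'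
      · exact h'
      · exact absurd h' hm
    rw [← this, hμs]
  · rintro ⟨n, rfl⟩
    exact ⟨ψ n, hψ n, key n⟩
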